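/- Main theorem (canonical HVGs are unigraphs): Let x, y : Fin N → ℝ both be canonical sequences. If for every vertex i the degree of i in HVG(x) equals the degree of i in HVG(y), then HVG(x) = HVG(y) as graphs on Fin N (i.e., they have the same adjacency relation). -/

import Mathlib

/-- The horizontal visibility graph of a sequence `x : Fin N → ℝ`:
`a < b` are adjacent iff `x k < min (x a) (x b)` for all `a < k < b`. -/
def HVG {N : ℕ} (x : Fin N → ℝ) : SimpleGraph (Fin N) where
  Adj a b := (a < b ∧ ∀ k, a < k → k < b → x k < min (x a) (x b)) ∨
             (b < a ∧ ∀ k, b < k → k < a → x k < min (x b) (x a))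
  symm := by constructor; intro a b h; tauto
  loopless := by constructor; intro a h; rcases h with ⟨h, -⟩ | ⟨h, -⟩ <;> exact lt_irrefl a h

/-- Degree of a vertex in the HVG. -/
noncomputable def hvgDegree {N : ℕ} (x : Fin N → ℝ) (v : Fin N) : ℕ :=
  Nat.card {w : Fin N // (HVG x).Adj v w}

namespace HVGaux
variable {N : ℕ}

lemma adj_iff (x : Fin N → ℝ) {a b : Fin N} (hab : a < b) :
    (HVG x).Adj a b ↔ ∀ k, a < k → k < b → x k < min (x a) (x b) := by
  constructor
  · rintro (⟨-, h⟩ | ⟨h, -⟩)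
    · exact h
    · exact absurd hab (not_lt.2 h.le)
  · exact fun h => Or.inl ⟨hab, h⟩

lemma adj_succ (x : Fin N → ℝ) {a b : Fin N} (h : (a : ℕ) + 1 = (b : ℕ)) :
    (HVG x).Adj a b := by
  refine (adj_iff x (by rw [Fin.lt_def]; omega)).2 fun k hk1 hk2 => ?_
  rw [Fin.lt_def] at hk1 hk2; omega

lemma deg_eq (x : Fin N → ℝ) (v : Fin N) :
    hvgDegree x v = Set.ncard {w | (HVG x).Adj v w} := by
  rw [hvgDegree, ← Nat.card_coe_set_eq]; rfl

lemma valley_adj_iff (x : Fin N → ℝ) (i : Fin N) (h0 : 0 < (i : ℕ)) (h1 : (i : ℕ) + 1 < N)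
    (hL : x i < x ⟨(i : ℕ) - 1, by omega⟩) (hR : x i < x ⟨(i : ℕ) + 1, h1⟩) (c : Fin N) :
    (HVG x).Adj i c ↔ (c : ℕ) + 1 = (i : ℕ) ∨ (c : ℕ) = (i : ℕ) + 1 := by
  constructor
  · rintro (⟨hic, h⟩ | ⟨hci, h⟩)
    · rw [Fin.lt_def] at hic
      right
      by_contra hc
      have h2 : (i : ℕ) + 1 < (c : ℕ) := by omega
      have := h ⟨(i : ℕ) + 1, h1⟩ (by simp only [Fin.lt_def, Fin.val_mk]; omega) (by simp only [Fin.lt_def, Fin.val_mk]; omega)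
      have := min_le_left (x i) (x c)
      nlinarith [hR]
    · rw [Fin.lt_def] at hci
      left
      by_contra hc
      have h2 : (c : ℕ) + 1 < (i : ℕ) := by omega
      have := h ⟨(i : ℕ) - 1, by omega⟩ (by simp only [Fin.lt_def, Fin.val_mk]; omega) (by simp only [Fin.lt_def, Fin.val_mk]; omega)
      have := min_le_right (x c) (x i)
      nlinarith [hL]
  · rintro (h | h)
    · exact ((HVG x).adj_symm (adj_succ x h))
    · exact adj_succ x h.symm

lemma deg_of_valley (x : Fin N → ℝ) (i : Fin N) (h0 : 0 < (i : ℕ)) (h1 : (i : ℕ) + 1 < N)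
    (hL : x i < x ⟨(i : ℕ) - 1, by omega⟩) (hR : x i < x ⟨(i : ℕ) + 1, h1⟩) :
    hvgDegree x i = 2 := by
  rw [deg_eq]
  have : {w | (HVG x).Adj i w} = {⟨(i : ℕ) - 1, by omega⟩, ⟨(i : ℕ) + 1, h1⟩} := by
    ext c
    rw [Set.mem_setOf_eq, valley_adj_iff x i h0 h1 hL hR c]
    constructor
    · rintro (h | h)
      · left; exact Fin.ext (by simp; omega)
      · right; exact Fin.ext (by simp; omega)
    · rintro (h | h) <;> subst h <;> simp <;> omega
  rw [this, Set.ncard_pair (by intro h; have := congrArg Fin.val h; simp only [Fin.val_mk] at this; omega)]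

lemma three_le_deg (x : Fin N → ℝ) (i : Fin N) (a b c : Fin N)
    (ha : (HVG x).Adj i a) (hb : (HVG x).Adj i b) (hc : (HVG x).Adj i c)
    (hab : a ≠ b) (hac : a ≠ c) (hbc : b ≠ c) : 3 ≤ hvgDegree x i := by
  rw [deg_eq]
  have hsub : {a, b, c} ⊆ {w | (HVG x).Adj i w} := by
    intro w hw
    rcases hw with h | h | h <;> simp_all
  calc 3 = ({a, b, c} : Set (Fin N)).ncard :=
          (Set.ncard_eq_three.2 ⟨a, b, c, hab, hac, hbc, rfl⟩).symm
    _ ≤ _ := Set.ncard_le_ncard hsub (Set.toFinite _)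

lemma valley_of_deg_two (hN : 2 ≤ N) (x : Fin N → ℝ)
    (hmax : ∀ k : Fin N, 0 < (k : ℕ) → (k : ℕ) < N - 1 →
      x k < min (x ⟨0, Nat.zero_lt_of_lt hN⟩) (x ⟨N - 1, Nat.sub_lt (Nat.zero_lt_of_lt hN) Nat.one_pos⟩))
    (hinj : ∀ k l : Fin N, 0 < (k : ℕ) → (k : ℕ) < N - 1 →
      0 < (l : ℕ) → (l : ℕ) < N - 1 → x k = x l → k = l)
    (i : Fin N) (h0 : 0 < (i : ℕ)) (h1 : (i : ℕ) + 1 < N)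
    (hdeg : hvgDegree x i = 2) :
    x i < x ⟨(i : ℕ) - 1, by omega⟩ ∧ x i < x ⟨(i : ℕ) + 1, h1⟩ := by
  obtain ⟨im, himv⟩ : ∃ im : Fin N, (im : ℕ) = (i : ℕ) - 1 := ⟨⟨(i : ℕ) - 1, by omega⟩, rfl⟩
  obtain ⟨ip, hipv⟩ : ∃ ip : Fin N, (ip : ℕ) = (i : ℕ) + 1 := ⟨⟨(i : ℕ) + 1, h1⟩, rfl⟩
  have heqm : (⟨(i : ℕ) - 1, by omega⟩ : Fin N) = im := Fin.ext (by simp [himv])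
  have heqp : (⟨(i : ℕ) + 1, h1⟩ : Fin N) = ip := Fin.ext (by simp [hipv])
  rw [heqm, heqp]
  have hadjm : (HVG x).Adj i im := ((HVG x).adj_comm im i).1 (adj_succ x (by omega))
  have hadjp : (HVG x).Adj i ip := adj_succ x (by omega)
  constructor
  · by_contra hv
    have him0 : 0 < (im : ℕ) := by
      by_contra h
      have h0' : (⟨0, by omega⟩ : Fin N) = im := Fin.ext (by simp; omega)
      have := hmax i h0 (by omega)
      rw [h0'] at this
      exact hv (lt_of_lt_of_le this (min_le_left _ _))
    have himlt : x im < x i := by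
      rcases lt_or_eq_of_le (not_lt.1 hv) with h | h
      · exact h
      · exact absurd (congrArg Fin.val (hinj im i him0 (by omega) h0 (by omega) h)) (by omega)
    have hS : (Finset.univ.filter (fun j : Fin N => (j : ℕ) < (i : ℕ) - 1 ∧ x im < x j)).Nonempty := by
      refine ⟨⟨0, by omega⟩, Finset.mem_filter.2 ⟨Finset.mem_univ _, by simp; omega, ?_⟩⟩
      exact lt_of_lt_of_le (hmax im him0 (by omega)) (min_le_left _ _)
    obtain ⟨j, hjmem, hjmax⟩ := (Finset.univ.filter
        (fun j : Fin N => (j : ℕ) < (i : ℕ) - 1 ∧ x im < x j)).exists_max_image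
        (fun j => (j : ℕ)) hS
    rw [Finset.mem_filter] at hjmem
    obtain ⟨-, hjlt, hjval⟩ := hjmem
    have hadj : (HVG x).Adj i j := by
      refine ((HVG x).adj_comm j i).1 ?_
      refine (adj_iff x (show j < i by rw [Fin.lt_def]; omega)).2 fun k hk1 hk2 => ?_
      rw [Fin.lt_def] at hk1 hk2
      rcases Nat.lt_or_ge (k : ℕ) ((i : ℕ) - 1) with hk | hk
      · have hknot : ¬ x im < x k := fun hcon => by
          have := hjmax k (Finset.mem_filter.2 ⟨Finset.mem_univ _, hk, hcon⟩); omega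
        have hkne : x k ≠ x im := fun h =>
          absurd (congrArg Fin.val (hinj k im (by omega) (by omega) him0 (by omega) h)) (by omega)
        have : x k < x im := lt_of_le_of_ne (not_lt.1 hknot) hkne
        exact lt_min (this.trans hjval) (this.trans himlt)
      · have hkim : k = im := Fin.ext (by omega)
        rw [hkim]
        exact lt_min hjval himlt
    have := three_le_deg x i j im ip hadj hadjm hadjp
      (Fin.ne_of_val_ne (by omega)) (Fin.ne_of_val_ne (by omega)) (Fin.ne_of_val_ne (by omega))
    omega
  · by_contra hv
    have hip1 : (ip : ℕ) < N - 1 := by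
      by_contra h
      have h0' : (⟨N - 1, by omega⟩ : Fin N) = ip := Fin.ext (by simp; omega)
      have := hmax i h0 (by omega)
      rw [h0'] at this
      exact hv (lt_of_lt_of_le this (min_le_right _ _))
    have hiplt : x ip < x i := by
      rcases lt_or_eq_of_le (not_lt.1 hv) with h | h
      · exact h
      · exact absurd (congrArg Fin.val (hinj ip i (by omega) hip1 h0 (by omega) h)) (by omega)
    have hS : (Finset.univ.filter (fun j : Fin N => (i : ℕ) + 1 < (j : ℕ) ∧ x ip < x j)).Nonempty := by
      refine ⟨⟨N - 1, by omega⟩, Finset.mem_filter.2 ⟨Finset.mem_univ _, by simp; omega, ?_⟩⟩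
      exact lt_of_lt_of_le (hmax ip (by omega) hip1) (min_le_right _ _)
    obtain ⟨j, hjmem, hjmin⟩ := (Finset.univ.filter
        (fun j : Fin N => (i : ℕ) + 1 < (j : ℕ) ∧ x ip < x j)).exists_min_image
        (fun j => (j : ℕ)) hS
    rw [Finset.mem_filter] at hjmem
    obtain ⟨-, hjlt, hjval⟩ := hjmem
    have hadj : (HVG x).Adj i j := by
      refine (adj_iff x (show i < j by rw [Fin.lt_def]; omega)).2 fun k hk1 hk2 => ?_
      rw [Fin.lt_def] at hk1 hk2
      rcases Nat.lt_or_ge ((i : ℕ) + 1) (k : ℕ) with hk | hk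
      · have hknot : ¬ x ip < x k := fun hcon => by
          have := hjmin k (Finset.mem_filter.2 ⟨Finset.mem_univ _, hk, hcon⟩); omega
        have hkne : x k ≠ x ip := fun h =>
          absurd (congrArg Fin.val (hinj k ip (by omega) (by omega) (by omega) hip1 h)) (by omega)
        have : x k < x ip := lt_of_le_of_ne (not_lt.1 hknot) hkne
        exact lt_min (this.trans hiplt) (this.trans hjval)
      · have hkip : k = ip := Fin.ext (by omega)
        rw [hkip]
        exact lt_min hiplt hjval
    have := three_le_deg x i im ip j hadjm hadjp hadj
      (Fin.ne_of_val_ne (by omega)) (Fin.ne_of_val_ne (by omega)) (Fin.ne_of_val_ne (by omega))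
    omega


lemma exists_valley (hN : 3 ≤ N) (x : Fin N → ℝ)
    (hmax : ∀ k : Fin N, 0 < (k : ℕ) → (k : ℕ) < N - 1 →
      x k < min (x ⟨0, by omega⟩) (x ⟨N - 1, by omega⟩))
    (hinj : ∀ k l : Fin N, 0 < (k : ℕ) → (k : ℕ) < N - 1 →
      0 < (l : ℕ) → (l : ℕ) < N - 1 → x k = x l → k = l) :
    ∃ i : Fin N, ∃ h0 : 0 < (i : ℕ), ∃ h1 : (i : ℕ) + 1 < N,
      x i < x ⟨(i : ℕ) - 1, by omega⟩ ∧ x i < x ⟨(i : ℕ) + 1, h1⟩ := by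
  have hS : (Finset.univ.filter (fun j : Fin N => 0 < (j : ℕ) ∧ (j : ℕ) < N - 1)).Nonempty :=
    ⟨⟨1, by omega⟩, Finset.mem_filter.2 ⟨Finset.mem_univ _, by simp; omega⟩⟩
  obtain ⟨i, himem, hmin⟩ := (Finset.univ.filter
      (fun j : Fin N => 0 < (j : ℕ) ∧ (j : ℕ) < N - 1)).exists_min_image x hS
  rw [Finset.mem_filter] at himem
  obtain ⟨-, h0, h1'⟩ := himem
  have h1 : (i : ℕ) + 1 < N := by omega
  refine ⟨i, h0, h1, ?_, ?_⟩
  · obtain ⟨im, himv⟩ : ∃ im : Fin N, (im : ℕ) = (i : ℕ) - 1 := ⟨⟨(i : ℕ) - 1, by omega⟩, rfl⟩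
    have heqm : (⟨(i : ℕ) - 1, by omega⟩ : Fin N) = im := Fin.ext (by simp [himv])
    rw [heqm]
    rcases Nat.lt_or_ge (i : ℕ) 2 with h | h
    · have h0' : im = ⟨0, by omega⟩ := Fin.ext (by simp; omega)
      rw [h0']
      exact lt_of_lt_of_le (hmax i h0 h1') (min_le_left _ _)
    · have hmem : im ∈ Finset.univ.filter (fun j : Fin N => 0 < (j : ℕ) ∧ (j : ℕ) < N - 1) :=
        Finset.mem_filter.2 ⟨Finset.mem_univ _, by omega⟩
      have hle := hmin im hmem
      rcases lt_or_eq_of_le hle with h' | h'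
      · exact h'
      · exact absurd (congrArg Fin.val (hinj i im h0 h1' (by omega) (by omega) h')) (by omega)
  · obtain ⟨ip, hipv⟩ : ∃ ip : Fin N, (ip : ℕ) = (i : ℕ) + 1 := ⟨⟨(i : ℕ) + 1, h1⟩, rfl⟩
    have heqp : (⟨(i : ℕ) + 1, h1⟩ : Fin N) = ip := Fin.ext (by simp [hipv])
    rw [heqp]
    rcases Nat.lt_or_ge ((i : ℕ) + 1) (N - 1) with h | h
    · have hmem : ip ∈ Finset.univ.filter (fun j : Fin N => 0 < (j : ℕ) ∧ (j : ℕ) < N - 1) :=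
        Finset.mem_filter.2 ⟨Finset.mem_univ _, by omega⟩
      have hle := hmin ip hmem
      rcases lt_or_eq_of_le hle with h' | h'
      · exact h'
      · exact absurd (congrArg Fin.val (hinj i ip h0 h1' (by omega) (by omega) h')) (by omega)
    · have h0' : ip = ⟨N - 1, by omega⟩ := Fin.ext (by simp; omega)
      rw [h0']
      exact lt_of_lt_of_le (hmax i h0 h1') (min_le_right _ _)

/-- The embedding of `Fin (N-1)` into `Fin N` skipping index `i`. -/
def emb (i : Fin N) (j : Fin (N - 1)) : Fin N :=
  ⟨if (j : ℕ) < (i : ℕ) then (j : ℕ) else (j : ℕ) + 1, by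
    have := j.isLt; split_ifs <;> omega⟩

lemma emb_val (i : Fin N) (j : Fin (N - 1)) :
    (emb i j : ℕ) = if (j : ℕ) < (i : ℕ) then (j : ℕ) else (j : ℕ) + 1 := rfl

lemma emb_ne (i : Fin N) (j : Fin (N - 1)) : emb i j ≠ i := by
  apply Fin.ne_of_val_ne; rw [emb_val]; split_ifs <;> omega

lemma emb_lt_iff (i : Fin N) (a b : Fin (N - 1)) : emb i a < emb i b ↔ a < b := by
  rw [Fin.lt_def, Fin.lt_def, emb_val, emb_val]; split_ifs <;> omega

lemma emb_surj (i : Fin N) (w : Fin N) (hw : w ≠ i) : ∃ j, emb i j = w := by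
  have hv : (w : ℕ) ≠ (i : ℕ) := fun h => hw (Fin.ext h)
  have hiN : (i : ℕ) < N := i.isLt
  rcases Nat.lt_or_ge (w : ℕ) (i : ℕ) with h | h
  · exact ⟨⟨(w : ℕ), by omega⟩, Fin.ext (by rw [emb_val]; simp only [Fin.val_mk]; split_ifs <;> omega)⟩
  · refine ⟨⟨(w : ℕ) - 1, by have := w.isLt; omega⟩, Fin.ext ?_⟩
    rw [emb_val]; simp only [Fin.val_mk]; split_ifs <;> omega


section Del
variable (x : Fin N → ℝ) (i : Fin N) (h0 : 0 < (i : ℕ)) (h1 : (i : ℕ) + 1 < N)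

lemma del_adj_lt
    (hL : x i < x ⟨(i : ℕ) - 1, by omega⟩) (hR : x i < x ⟨(i : ℕ) + 1, h1⟩)
    {a b : Fin (N - 1)} (hab : a < b) :
    (HVG (fun j => x (emb i j))).Adj a b ↔ (HVG x).Adj (emb i a) (emb i b) := by
  rw [adj_iff _ hab, adj_iff x ((emb_lt_iff i a b).2 hab)]
  constructor
  · intro h k hk1 hk2
    by_cases hki : k = i
    · rw [hki] at hk1 hk2 ⊢
      -- need x i < min (x (emb i a)) (x (emb i b))
      have hav : (emb i a : ℕ) < (i : ℕ) := Fin.lt_def.1 hk1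
      have hbv : (i : ℕ) < (emb i b : ℕ) := Fin.lt_def.1 hk2
      rcases Nat.lt_or_ge (emb i a : ℕ) ((i : ℕ) - 1) with ha' | ha'
      · -- i-1 is properly between: it equals emb i j' for some j'
        obtain ⟨jm, hjm⟩ := emb_surj i ⟨(i : ℕ) - 1, by omega⟩ (Fin.ne_of_val_ne (by simp only [Fin.val_mk]; omega))
        have h1' : a < jm := by
          rw [← emb_lt_iff i, hjm, Fin.lt_def]; simp; omega
        have h2' : jm < b := by
          rw [← emb_lt_iff i, hjm, Fin.lt_def]; simp; omega
        have := h jm h1' h2'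
        rw [hjm] at this
        exact (hL.trans this)
      · -- emb i a = i - 1
        have haeq : x (emb i a) = x ⟨(i : ℕ) - 1, by omega⟩ := by
          congr 1; exact Fin.ext (by simp; omega)
        rcases Nat.lt_or_ge ((i : ℕ) + 1) (emb i b : ℕ) with hb' | hb'
        · obtain ⟨jp, hjp⟩ := emb_surj i ⟨(i : ℕ) + 1, h1⟩ (Fin.ne_of_val_ne (by simp only [Fin.val_mk]; omega))
          have h1' : a < jp := by
            rw [← emb_lt_iff i, hjp, Fin.lt_def]; simp; omega
          have h2' : jp < b := by
            rw [← emb_lt_iff i, hjp, Fin.lt_def]; simp; omega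
          have := h jp h1' h2'
          rw [hjp] at this
          exact (hR.trans this)
        · have hbeq : x (emb i b) = x ⟨(i : ℕ) + 1, h1⟩ := by
            congr 1; exact Fin.ext (by simp; omega)
          rw [haeq, hbeq]
          exact lt_min hL hR
    · obtain ⟨k', hk'⟩ := emb_surj i k hki
      subst hk'
      exact h k' ((emb_lt_iff i a k').1 hk1) ((emb_lt_iff i k' b).1 hk2)
  · intro h k hk1 hk2
    exact h (emb i k) ((emb_lt_iff i a k).2 hk1) ((emb_lt_iff i k b).2 hk2)

lemma del_adj
    (hL : x i < x ⟨(i : ℕ) - 1, by omega⟩) (hR : x i < x ⟨(i : ℕ) + 1, h1⟩)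
    (a b : Fin (N - 1)) :
    (HVG (fun j => x (emb i j))).Adj a b ↔ (HVG x).Adj (emb i a) (emb i b) := by
  rcases lt_trichotomy a b with h | h | h
  · exact del_adj_lt x i h0 h1 hL hR h
  · subst h
    simp only [SimpleGraph.irrefl]
  · rw [(HVG _).adj_comm, (HVG x).adj_comm]
    exact del_adj_lt x i h0 h1 hL hR h

lemma del_deg
    (hL : x i < x ⟨(i : ℕ) - 1, by omega⟩) (hR : x i < x ⟨(i : ℕ) + 1, h1⟩)
    (j : Fin (N - 1)) :
    hvgDegree x (emb i j) = hvgDegree (fun j => x (emb i j)) j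
      + (if (emb i j : ℕ) + 1 = (i : ℕ) ∨ (emb i j : ℕ) = (i : ℕ) + 1 then 1 else 0) := by
  rw [deg_eq, deg_eq]
  set S : Set (Fin N) := {w | (HVG x).Adj (emb i j) w} with hS
  have himg : S \ {i} = emb i '' {w | (HVG (fun j => x (emb i j))).Adj j w} := by
    ext w
    simp only [Set.mem_diff, Set.mem_singleton_iff, Set.mem_image, Set.mem_setOf_eq, hS]
    constructor
    · rintro ⟨hadj, hne⟩
      obtain ⟨w', hw'⟩ := emb_surj i w hne
      exact ⟨w', (del_adj x i h0 h1 hL hR j w').2 (hw' ▸ hadj), hw'⟩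
    · rintro ⟨w', hadj, rfl⟩
      exact ⟨(del_adj x i h0 h1 hL hR j w').1 hadj, emb_ne i w'⟩
  have hinj : Function.Injective (emb i) := fun a b hab => by
    have := congrArg Fin.val hab
    rw [emb_val, emb_val] at this
    apply Fin.ext
    split_ifs at this <;> omega
  have hcard : (S \ {i}).ncard = {w | (HVG (fun j => x (emb i j))).Adj j w}.ncard := by
    rw [himg, Set.ncard_image_of_injective _ hinj]
  have hiS : i ∈ S ↔ ((emb i j : ℕ) + 1 = (i : ℕ) ∨ (emb i j : ℕ) = (i : ℕ) + 1) := by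
    rw [hS, Set.mem_setOf_eq, (HVG x).adj_comm]
    exact valley_adj_iff x i h0 h1 hL hR (emb i j)
  by_cases hi : i ∈ S
  · rw [if_pos (hiS.1 hi), ← hcard]
    have : S = insert i (S \ {i}) := by
      rw [Set.insert_diff_singleton, Set.insert_eq_of_mem hi]
    nth_rewrite 1 [this]
    rw [Set.ncard_insert_of_notMem (by simp) ((Set.toFinite _))]
  · rw [if_neg (fun h => hi (hiS.2 h)), ← hcard]
    congr 1
    rw [Set.diff_singleton_eq_self (by simpa using hi)]

end Del


lemma emb_zero (i : Fin N) (h0 : 0 < (i : ℕ)) (hN : 2 ≤ N) :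
    emb i ⟨0, by omega⟩ = ⟨0, by omega⟩ :=
  Fin.ext (by rw [emb_val]; simp only [Fin.val_mk]; split_ifs <;> omega)

lemma emb_last (i : Fin N) (h1 : (i : ℕ) + 1 < N) (hN : 3 ≤ N) :
    emb i ⟨N - 1 - 1, by omega⟩ = ⟨N - 1, by omega⟩ :=
  Fin.ext (by rw [emb_val]; simp only [Fin.val_mk]; split_ifs <;> omega)

lemma main_aux : ∀ N : ℕ, ∀ hN : 2 ≤ N, ∀ x y : Fin N → ℝ,
    (∀ k : Fin N, 0 < (k : ℕ) → (k : ℕ) < N - 1 →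
      x k < min (x ⟨0, Nat.zero_lt_of_lt hN⟩) (x ⟨N - 1, Nat.sub_lt (Nat.zero_lt_of_lt hN) Nat.one_pos⟩)) →
    (∀ k l : Fin N, 0 < (k : ℕ) → (k : ℕ) < N - 1 →
      0 < (l : ℕ) → (l : ℕ) < N - 1 → x k = x l → k = l) →
    (∀ k : Fin N, 0 < (k : ℕ) → (k : ℕ) < N - 1 →
      y k < min (y ⟨0, Nat.zero_lt_of_lt hN⟩) (y ⟨N - 1, Nat.sub_lt (Nat.zero_lt_of_lt hN) Nat.one_pos⟩)) →
    (∀ k l : Fin N, 0 < (k : ℕ) → (k : ℕ) < N - 1 →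
      0 < (l : ℕ) → (l : ℕ) < N - 1 → y k = y l → k = l) →
    (∀ i : Fin N, hvgDegree x i = hvgDegree y i) →
    HVG x = HVG y := by
  intro N
  induction N using Nat.strong_induction_on with
  | _ N IH =>
    intro hN x y hmax hinj hmax' hinj' hdeg
    rcases Nat.lt_or_ge N 3 with hN3 | hN3
    · -- N = 2 : both graphs are the complete graph on two vertices
      have hN2 : N = 2 := by omega
      subst hN2
      have h2 : ∀ (z : Fin 2 → ℝ) (a b : Fin 2), (HVG z).Adj a b ↔ a ≠ b := by
        intro z a b
        constructor
        · exact fun h => (HVG z).ne_of_adj h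
        · intro hne
          rcases Fin.lt_or_lt_of_ne hne with h | h
          · exact Or.inl ⟨h, fun k hk1 hk2 => by
              rw [Fin.lt_def] at hk1 hk2; have := a.isLt; have := b.isLt; have := k.isLt; omega⟩
          · exact Or.inr ⟨h, fun k hk1 hk2 => by
              rw [Fin.lt_def] at hk1 hk2; have := a.isLt; have := b.isLt; have := k.isLt; omega⟩
      ext a b
      rw [h2, h2]
    · obtain ⟨i, h0, h1, hLx, hRx⟩ := exists_valley hN3 x hmax hinj
      have hdx : hvgDegree x i = 2 := deg_of_valley x i h0 h1 hLx hRx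
      have hdy : hvgDegree y i = 2 := by rw [← hdeg]; exact hdx
      obtain ⟨hLy, hRy⟩ := valley_of_deg_two hN y hmax' hinj' i h0 h1 hdy
      have hinner : ∀ k : Fin (N - 1), 0 < (k : ℕ) → (k : ℕ) < N - 1 - 1 →
          0 < (emb i k : ℕ) ∧ (emb i k : ℕ) < N - 1 := by
        intro k hk0 hk1
        have := emb_val i k
        constructor <;> (split_ifs at this <;> omega)
      -- canonicity of the deleted sequences
      have hmaxx'' : ∀ (z : Fin N → ℝ),
          (∀ k : Fin N, 0 < (k : ℕ) → (k : ℕ) < N - 1 →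
            z k < min (z ⟨0, Nat.zero_lt_of_lt hN⟩) (z ⟨N - 1, Nat.sub_lt (Nat.zero_lt_of_lt hN) Nat.one_pos⟩)) →
          ∀ k : Fin (N - 1), 0 < (k : ℕ) → (k : ℕ) < N - 1 - 1 →
          z (emb i k) < min (z (emb i ⟨0, by omega⟩)) (z (emb i ⟨N - 1 - 1, by omega⟩)) := by
        intro z hz k hk0 hk1
        rw [emb_zero i h0 hN, emb_last i h1 hN3]
        exact hz (emb i k) (hinner k hk0 hk1).1 (hinner k hk0 hk1).2
      have hinjx'' : ∀ (z : Fin N → ℝ),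
          (∀ k l : Fin N, 0 < (k : ℕ) → (k : ℕ) < N - 1 →
            0 < (l : ℕ) → (l : ℕ) < N - 1 → z k = z l → k = l) →
          ∀ k l : Fin (N - 1), 0 < (k : ℕ) → (k : ℕ) < N - 1 - 1 →
            0 < (l : ℕ) → (l : ℕ) < N - 1 - 1 → z (emb i k) = z (emb i l) → k = l := by
        intro z hz k l hk0 hk1 hl0 hl1 h
        have := hz (emb i k) (emb i l) (hinner k hk0 hk1).1 (hinner k hk0 hk1).2
          (hinner l hl0 hl1).1 (hinner l hl0 hl1).2 h
        have hv := congrArg Fin.val this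
        rw [emb_val, emb_val] at hv
        apply Fin.ext
        split_ifs at hv <;> omega
      have hdeg' : ∀ j : Fin (N - 1),
          hvgDegree (fun j => x (emb i j)) j = hvgDegree (fun j => y (emb i j)) j := by
        intro j
        have hx := del_deg x i h0 h1 hLx hRx j
        have hy := del_deg y i h0 h1 hLy hRy j
        have hd := hdeg (emb i j)
        split_ifs at hx hy <;> omega
      have hrec := IH (N - 1) (by omega) (by omega)
        (fun j => x (emb i j)) (fun j => y (emb i j))
        (hmaxx'' x hmax) (hinjx'' x hinj) (hmaxx'' y hmax') (hinjx'' y hinj') hdeg'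
      ext a b
      by_cases hai : a = i
      · subst hai
        rw [valley_adj_iff x a h0 h1 hLx hRx b, valley_adj_iff y a h0 h1 hLy hRy b]
      · by_cases hbi : b = i
        · subst hbi
          rw [(HVG x).adj_comm, (HVG y).adj_comm,
            valley_adj_iff x b h0 h1 hLx hRx a, valley_adj_iff y b h0 h1 hLy hRy a]
        · obtain ⟨a', rfl⟩ := emb_surj i a hai
          obtain ⟨b', rfl⟩ := emb_surj i b hbi
          rw [← del_adj x i h0 h1 hLx hRx a' b', ← del_adj y i h0 h1 hLy hRy a' b', hrec]

end HVGaux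

theorem hvg_canonical_unigraph {N : ℕ} (hN : 2 ≤ N) (x y : Fin N → ℝ)
    (hmax : ∀ k : Fin N, 0 < (k : ℕ) → (k : ℕ) < N - 1 →
      x k < min (x ⟨0, by omega⟩) (x ⟨N - 1, by omega⟩))
    (hinj : ∀ k l : Fin N, 0 < (k : ℕ) → (k : ℕ) < N - 1 →
      0 < (l : ℕ) → (l : ℕ) < N - 1 → x k = x l → k = l)
    (hmax' : ∀ k : Fin N, 0 < (k : ℕ) → (k : ℕ) < N - 1 →
      y k < min (y ⟨0, by omega⟩) (y ⟨N - 1, by omega⟩))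
    (hinj' : ∀ k l : Fin N, 0 < (k : ℕ) → (k : ℕ) < N - 1 →
      0 < (l : ℕ) → (l : ℕ) < N - 1 → y k = y l → k = l)
    (hdeg : ∀ i : Fin N, hvgDegree x i = hvgDegree y i) :
    HVG x = HVG y :=
  HVGaux.main_aux N hN x y hmax hinj hmax' hinj' hdeg
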